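/- Let R be a Γ-graded integral domain and let S be a quasi-compact subspace of HStar_f(R) (the space of finite-type homogeneous star operations with the Zariski topology). Then the infimum ⋀(S), defined by A^{⋀(S)} = ⋂_{⋆∈S} A^⋆, is again a finite-type homogeneous star operation. -/

import Mathlib

open FractionalIdeal
open scoped Classical

section Setup

variable {Γ : Type*} [AddCommMonoid Γ] [LinearOrder Γ] [IsOrderedCancelAddMonoid Γ] [DecidableEq Γ]
  {R : Type*} [CommRing R] [IsDomain R]
  (𝒜 : Γ → AddSubgroup R) [GradedRing 𝒜]
  (K : Type*) [Field K] [Algebra R K] [IsFractionRing R K]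

/-- The integral ideal corresponding to a fractional ideal contained in `R`. -/
def idealOf (J : FractionalIdeal (nonZeroDivisors R) K) : Ideal R :=
  (J : Submodule R K).comap (Algebra.linearMap R K)

/-- An integral ideal is homogeneous if it contains all homogeneous components of its elements. -/
def IsHomIdeal (I : Ideal R) : Prop := ∀ f ∈ I, ∀ γ : Γ, GradedRing.proj 𝒜 γ f ∈ I

/-- `C(I)`: the homogeneous ideal generated by the homogeneous components of elements of `I`. -/
def homC (I : Ideal R) : Ideal R :=
  Ideal.span {x | ∃ f ∈ I, ∃ γ : Γ, x = GradedRing.proj 𝒜 γ f}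

/-- `C(J)` for a fractional ideal `J ⊆ R`, as a fractional ideal. -/
def Cfrac (J : FractionalIdeal (nonZeroDivisors R) K) : FractionalIdeal (nonZeroDivisors R) K :=
  ↑(homC 𝒜 (idealOf K J))

/-- A fractional ideal is homogeneous if some nonzero homogeneous `s ∈ R` multiplies it into a
homogeneous integral ideal. -/
def IsHomFrac (A : FractionalIdeal (nonZeroDivisors R) K) : Prop :=
  ∃ s : R, s ≠ 0 ∧ SetLike.IsHomogeneousElem 𝒜 s ∧
    spanSingleton (nonZeroDivisors R) (algebraMap R K s) * A ≤ 1 ∧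
    IsHomIdeal 𝒜 (idealOf K (spanSingleton (nonZeroDivisors R) (algebraMap R K s) * A))

/-- A homogeneous element of the homogeneous quotient field, viewed inside `K`. -/
def IsHomElem (x : K) : Prop :=
  ∃ a b : R, SetLike.IsHomogeneousElem 𝒜 a ∧ SetLike.IsHomogeneousElem 𝒜 b ∧ b ≠ 0 ∧
    x * algebraMap R K b = algebraMap R K a

end Setup

/-- A homogeneous star operation on the graded domain `R`. -/
structure HomStarOp {Γ : Type*} [AddCommMonoid Γ] [LinearOrder Γ] [IsOrderedCancelAddMonoid Γ] [DecidableEq Γ]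
    {R : Type*} [CommRing R] [IsDomain R] (𝒜 : Γ → AddSubgroup R) [GradedRing 𝒜]
    (K : Type*) [Field K] [Algebra R K] [IsFractionRing R K] where
  toFun : FractionalIdeal (nonZeroDivisors R) K → FractionalIdeal (nonZeroDivisors R) K
  hom : ∀ A, A ≠ 0 → IsHomFrac 𝒜 K A → IsHomFrac 𝒜 K (toFun A)
  map_span : ∀ x : K, x ≠ 0 → IsHomElem 𝒜 K x →
    toFun (spanSingleton (nonZeroDivisors R) x) = spanSingleton (nonZeroDivisors R) x
  map_smul : ∀ x : K, x ≠ 0 → IsHomElem 𝒜 K x → ∀ A, A ≠ 0 → IsHomFrac 𝒜 K A →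
    toFun (spanSingleton (nonZeroDivisors R) x * A) = spanSingleton (nonZeroDivisors R) x * toFun A
  le_star : ∀ A, A ≠ 0 → IsHomFrac 𝒜 K A → A ≤ toFun A
  mono : ∀ A B, A ≠ 0 → B ≠ 0 → IsHomFrac 𝒜 K A → IsHomFrac 𝒜 K B → A ≤ B → toFun A ≤ toFun B
  idem : ∀ A, A ≠ 0 → IsHomFrac 𝒜 K A → toFun (toFun A) = toFun A

/-- A classical star operation on the domain `R`. -/
structure StarOp (R : Type*) [CommRing R] [IsDomain R]
    (K : Type*) [Field K] [Algebra R K] [IsFractionRing R K] where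
  toFun : FractionalIdeal (nonZeroDivisors R) K → FractionalIdeal (nonZeroDivisors R) K
  map_span : ∀ x : K, x ≠ 0 →
    toFun (spanSingleton (nonZeroDivisors R) x) = spanSingleton (nonZeroDivisors R) x
  map_smul : ∀ x : K, x ≠ 0 → ∀ A, A ≠ 0 →
    toFun (spanSingleton (nonZeroDivisors R) x * A) = spanSingleton (nonZeroDivisors R) x * toFun A
  le_star : ∀ A, A ≠ 0 → A ≤ toFun A
  mono : ∀ A B, A ≠ 0 → B ≠ 0 → A ≤ B → toFun A ≤ toFun B
  idem : ∀ A, A ≠ 0 → toFun (toFun A) = toFun A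

section EStar

variable {Γ : Type*} [AddCommMonoid Γ] [LinearOrder Γ] [IsOrderedCancelAddMonoid Γ] [DecidableEq Γ]
  {R : Type*} [CommRing R] [IsDomain R]
  (𝒜 : Γ → AddSubgroup R) [GradedRing 𝒜]
  (K : Type*) [Field K] [Algebra R K] [IsFractionRing R K]

/-- The submodule `⋂ { z⁻¹ (C(zA))^⋆ : 0 ≠ z ∈ (R : A) }`. -/
def eStarSub (s : HomStarOp 𝒜 K) (A : FractionalIdeal (nonZeroDivisors R) K) : Submodule R K :=
  ⨅ z ∈ {z : K | z ≠ 0 ∧ spanSingleton (nonZeroDivisors R) z * A ≤ 1},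
    ↑(spanSingleton (nonZeroDivisors R) z⁻¹ *
      s.toFun (Cfrac 𝒜 K (spanSingleton (nonZeroDivisors R) z * A)))

/-- The extension `e(⋆)` of a homogeneous star operation `⋆`,
`A^{e(⋆)} := ⋂ { z⁻¹ (C(zA))^⋆ : 0 ≠ z ∈ (R : A) }` (which is a fractional ideal whenever
`A` is a nonzero fractional ideal). -/
noncomputable def eStar (s : HomStarOp 𝒜 K) (A : FractionalIdeal (nonZeroDivisors R) K) :
    FractionalIdeal (nonZeroDivisors R) K :=
  if h : IsFractional (nonZeroDivisors R) (eStarSub 𝒜 K s A) then ⟨_, h⟩ else 0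

end EStar


/-- `A^{★_f}` as a set: the union of `B^★` over finitely generated `B ⊆ A`. -/
def finTypeSet {R : Type*} [CommRing R] [IsDomain R]
    (K : Type*) [Field K] [Algebra R K] [IsFractionRing R K]
    (t : FractionalIdeal (nonZeroDivisors R) K → FractionalIdeal (nonZeroDivisors R) K)
    (A : FractionalIdeal (nonZeroDivisors R) K) : Set K :=
  ⋃ B ∈ {B : FractionalIdeal (nonZeroDivisors R) K |
      B ≠ 0 ∧ B ≤ A ∧ (B : Submodule R K).FG}, {x : K | x ∈ t B}

/-- `A^{⋆_f}` as a set: the union of `B^⋆` over finitely generated homogeneous `B ⊆ A`. -/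
def homFinTypeSet {Γ : Type*} [AddCommMonoid Γ] [LinearOrder Γ] [IsOrderedCancelAddMonoid Γ] [DecidableEq Γ]
    {R : Type*} [CommRing R] [IsDomain R]
    (𝒜 : Γ → AddSubgroup R) [GradedRing 𝒜]
    (K : Type*) [Field K] [Algebra R K] [IsFractionRing R K]
    (t : FractionalIdeal (nonZeroDivisors R) K → FractionalIdeal (nonZeroDivisors R) K)
    (A : FractionalIdeal (nonZeroDivisors R) K) : Set K :=
  ⋃ B ∈ {B : FractionalIdeal (nonZeroDivisors R) K |
      B ≠ 0 ∧ B ≤ A ∧ IsHomFrac 𝒜 K B ∧ (B : Submodule R K).FG}, {x : K | x ∈ t B}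

/-- A homogeneous star operation is of finite type if
`A^⋆ = ⋃ {B^⋆ : B ⊆ A finitely generated homogeneous}`. -/
def IsFiniteTypeHomStar {Γ : Type*} [AddCommMonoid Γ] [LinearOrder Γ] [IsOrderedCancelAddMonoid Γ] [DecidableEq Γ]
    {R : Type*} [CommRing R] [IsDomain R]
    (𝒜 : Γ → AddSubgroup R) [GradedRing 𝒜]
    (K : Type*) [Field K] [Algebra R K] [IsFractionRing R K]
    (u : HomStarOp 𝒜 K) : Prop :=
  ∀ A : FractionalIdeal (nonZeroDivisors R) K, A ≠ 0 → IsHomFrac 𝒜 K A →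
    {x : K | x ∈ u.toFun A} = homFinTypeSet 𝒜 K u.toFun A

set_option linter.unusedSectionVars false
set_option linter.unusedVariables false
section Helpers

variable {Γ : Type*} [AddCommMonoid Γ] [LinearOrder Γ] [IsOrderedCancelAddMonoid Γ] [DecidableEq Γ]
  {R : Type*} [CommRing R] [IsDomain R]
  (𝒜 : Γ → AddSubgroup R) [GradedRing 𝒜]
  (K : Type*) [Field K] [Algebra R K] [IsFractionRing R K]

local notation "σ" => spanSingleton (nonZeroDivisors R)
local notation "aK" => algebraMap R K

theorem mem_idealOf {r : R} {J : FractionalIdeal (nonZeroDivisors R) K} :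
    r ∈ idealOf K J ↔ aK r ∈ J := Iff.rfl

theorem idealOf_coeIdeal (I : Ideal R) : idealOf K (I : FractionalIdeal (nonZeroDivisors R) K) = I := by
  ext r
  rw [mem_idealOf, mem_coeIdeal]
  constructor
  · rintro ⟨y, hy, e⟩
    rwa [← IsFractionRing.injective R K e]
  · intro hr
    exact ⟨r, hr, rfl⟩

theorem coeIdeal_idealOf {J : FractionalIdeal (nonZeroDivisors R) K} (hJ : J ≤ 1) :
    ((idealOf K J : Ideal R) : FractionalIdeal (nonZeroDivisors R) K) = J := by
  ext x
  rw [mem_coeIdeal]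
  constructor
  · rintro ⟨y, hy, rfl⟩
    exact hy
  · intro hx
    obtain ⟨r, hr⟩ := (mem_one_iff _).mp (hJ hx)
    exact ⟨r, by rwa [mem_idealOf, hr], hr⟩

theorem decompose_mul_mem {d : Γ} {s : R} (hs : s ∈ 𝒜 d) (r : R) (γ : Γ) :
    (DirectSum.decompose 𝒜 (s * r) (d + γ) : R) = s * DirectSum.decompose 𝒜 r γ := by
  induction r using DirectSum.Decomposition.inductionOn 𝒜 with
  | zero => simp
  | @homogeneous i x =>
    rcases eq_or_ne i γ with rfl | hne
    · rw [DirectSum.decompose_of_mem_same 𝒜 (SetLike.mul_mem_graded hs x.2),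
        DirectSum.decompose_of_mem_same 𝒜 x.2]
    · rw [DirectSum.decompose_of_mem_ne 𝒜 (SetLike.mul_mem_graded hs x.2)
        (fun h => hne (add_left_cancel h)),
        DirectSum.decompose_of_mem_ne 𝒜 x.2 hne, mul_zero]
  | add a b ha hb =>
    rw [mul_add, DirectSum.decompose_add, DirectSum.decompose_add]
    simp only [DirectSum.add_apply, AddSubgroup.coe_add]
    rw [ha, hb, mul_add]

theorem decompose_mul_eq_zero {d : Γ} {s : R} (hs : s ∈ 𝒜 d) (r : R) (δ : Γ)
    (h : ∀ γ, δ ≠ d + γ) : (DirectSum.decompose 𝒜 (s * r) δ : R) = 0 := by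
  induction r using DirectSum.Decomposition.inductionOn 𝒜 with
  | zero => simp
  | @homogeneous i x =>
    rw [DirectSum.decompose_of_mem_ne 𝒜 (SetLike.mul_mem_graded hs x.2) (fun e => h i e.symm)]
  | add a b ha hb =>
    rw [mul_add, DirectSum.decompose_add]
    simp only [DirectSum.add_apply, AddSubgroup.coe_add]
    rw [ha, hb, add_zero]

theorem isHomElem_algebraMap {s : R} (hs : SetLike.IsHomogeneousElem 𝒜 s) :
    IsHomElem 𝒜 K (aK s) :=
  ⟨s, 1, hs, SetLike.isHomogeneousElem_one 𝒜, one_ne_zero, by simp⟩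

theorem isHomElem_inv {x : K} (hx : x ≠ 0) (h : IsHomElem 𝒜 K x) : IsHomElem 𝒜 K x⁻¹ := by
  obtain ⟨a, b, ha, hb, hb0, he⟩ := h
  have hbK : aK b ≠ 0 := fun e => hb0 (IsFractionRing.injective R K (by simpa using e))
  have haK : aK a ≠ 0 := by
    rw [← he]; exact mul_ne_zero hx hbK
  have ha0 : a ≠ 0 := fun e => haK (by simp [e])
  refine ⟨b, a, hb, ha, ha0, ?_⟩
  field_simp
  rw [← he]

/-- Key lemma: homogeneous components of an element of a homogeneous fractional ideal stay in
the ideal.  Here `x ∈ J` with `aK s₀ * x = aK r`, `s₀` homogeneous; the `γ`-component of `x`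
is `aK (decompose r γ) / aK s₀`, expressed through a witness `y`. -/
theorem isHomFrac_component_mem {J : FractionalIdeal (nonZeroDivisors R) K}
    (hJ : IsHomFrac 𝒜 K J) {s₀ : R} (hs₀ : s₀ ≠ 0) {d₀ : Γ} (hd₀ : s₀ ∈ 𝒜 d₀)
    {r : R} {x : K} (hx : x ∈ J) (hxr : aK s₀ * x = aK r) (γ : Γ) :
    ∃ y ∈ J, aK s₀ * y = aK (DirectSum.decompose 𝒜 r γ : R) := by
  obtain ⟨s', hs'0, ⟨d', hd'⟩, hle, hhom⟩ := hJ
  have hs'K : aK s' ≠ 0 := fun e => hs'0 (IsFractionRing.injective R K (by simpa using e))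
  -- s' * x is integral
  have hmem : aK s' * x ∈ σ (aK s') * J := mem_singleton_mul.mpr ⟨x, hx, rfl⟩
  obtain ⟨r', hr'⟩ := (mem_one_iff _).mp (hle hmem)
  have hr'I : r' ∈ idealOf K (σ (aK s') * J) := by rwa [mem_idealOf, hr']
  -- s' * r = s₀ * r'
  have key : s' * r = s₀ * r' := by
    apply IsFractionRing.injective R K
    rw [_root_.map_mul, _root_.map_mul, ← hxr, hr']
    ring
  by_cases h : ∃ γ'', d' + γ = d₀ + γ''
  · obtain ⟨γ'', hγ''⟩ := h
    have e1 : (DirectSum.decompose 𝒜 (s' * r) (d' + γ) : R) = s' * DirectSum.decompose 𝒜 r γ :=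
      decompose_mul_mem 𝒜 hd' r γ
    have e2 : (DirectSum.decompose 𝒜 (s₀ * r') (d₀ + γ'') : R)
        = s₀ * DirectSum.decompose 𝒜 r' γ'' := decompose_mul_mem 𝒜 hd₀ r' γ''
    have e3 : s' * (DirectSum.decompose 𝒜 r γ : R) = s₀ * DirectSum.decompose 𝒜 r' γ'' := by
      rw [← e1, ← e2, ← hγ'', key]
    -- r'_{γ''} ∈ idealOf (σ s' * J)
    have h4 : (DirectSum.decompose 𝒜 r' γ'' : R) ∈ idealOf K (σ (aK s') * J) := by
      have := hhom r' hr'I γ''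
      rwa [GradedRing.proj_apply] at this
    rw [mem_idealOf] at h4
    obtain ⟨y, hy, hyeq⟩ := mem_singleton_mul.mp h4
    refine ⟨y, hy, ?_⟩
    apply mul_left_cancel₀ hs'K
    calc aK s' * (aK s₀ * y) = aK s₀ * (aK s' * y) := by ring
      _ = aK s₀ * aK ((DirectSum.decompose 𝒜 r' γ'' : R)) := by rw [← hyeq]
      _ = aK (s₀ * (DirectSum.decompose 𝒜 r' γ'' : R)) := (_root_.map_mul _ _ _).symm
      _ = aK (s' * (DirectSum.decompose 𝒜 r γ : R)) := by rw [← e3]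
      _ = aK s' * aK ((DirectSum.decompose 𝒜 r γ : R)) := _root_.map_mul _ _ _
  · push_neg at h
    have e1 : s' * (DirectSum.decompose 𝒜 r γ : R) = 0 := by
      rw [← decompose_mul_mem 𝒜 hd' r γ, key, decompose_mul_eq_zero 𝒜 hd₀ r' _ h]
    have : (DirectSum.decompose 𝒜 r γ : R) = 0 := by
      rcases mul_eq_zero.mp e1 with h' | h'
      · exact absurd h' hs'0
      · exact h'
    exact ⟨0, zero_mem _, by simp [this]⟩

theorem isHomIdeal_iff {I : Ideal R} : IsHomIdeal 𝒜 I ↔ Ideal.IsHomogeneous 𝒜 I := by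
  constructor
  · intro h i r hr
    have := h r hr i
    rwa [GradedRing.proj_apply] at this
  · intro h f hf γ
    rw [GradedRing.proj_apply]
    exact h γ hf

theorem spanSingleton_mul_ne_zero {x : K} (hx : x ≠ 0) {A : FractionalIdeal (nonZeroDivisors R) K}
    (hA : A ≠ 0) : σ x * A ≠ 0 := by
  intro h
  apply hA
  have : σ x⁻¹ * (σ x * A) = A := by
    rw [← mul_assoc, spanSingleton_mul_spanSingleton, inv_mul_cancel₀ hx, spanSingleton_one,
      one_mul]
  rw [← this, h, mul_zero]

theorem isHomFrac_coeIdeal {I : Ideal R} (hI : IsHomIdeal 𝒜 I) :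
    IsHomFrac 𝒜 K (I : FractionalIdeal (nonZeroDivisors R) K) := by
  refine ⟨1, one_ne_zero, SetLike.isHomogeneousElem_one 𝒜, ?_, ?_⟩ <;>
    rw [_root_.map_one, spanSingleton_one, one_mul]
  · exact coeIdeal_le_one
  · rwa [idealOf_coeIdeal]

theorem isHomFrac_one : IsHomFrac 𝒜 K (1 : FractionalIdeal (nonZeroDivisors R) K) := by
  have : ((⊤ : Ideal R) : FractionalIdeal (nonZeroDivisors R) K) = 1 := by
    simp
  rw [← this]
  exact isHomFrac_coeIdeal 𝒜 K (fun f _ γ => trivial)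

theorem isHomElem_one : IsHomElem 𝒜 K (1 : K) :=
  ⟨1, 1, SetLike.isHomogeneousElem_one 𝒜, SetLike.isHomogeneousElem_one 𝒜, one_ne_zero, by simp⟩

theorem isHomFrac_spanSingleton {x : K} (h : IsHomElem 𝒜 K x) :
    IsHomFrac 𝒜 K (σ x) := by
  obtain ⟨a, b, ha, hb, hb0, he⟩ := h
  have key : σ (aK b) * σ x = ((Ideal.span {a} : Ideal R) : FractionalIdeal (nonZeroDivisors R) K) := by
    rw [spanSingleton_mul_spanSingleton, mul_comm, he, coeIdeal_span_singleton]
  refine ⟨b, hb0, hb, ?_, ?_⟩ <;> rw [key]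
  · exact coeIdeal_le_one
  · rw [idealOf_coeIdeal]
    exact (isHomIdeal_iff 𝒜).mpr
      (Ideal.homogeneous_span 𝒜 _ (fun y hy => by rwa [Set.mem_singleton_iff.mp hy]))

theorem isHomFrac_smul_of_le_one {x : K} (hx : x ≠ 0) (h : IsHomElem 𝒜 K x)
    {A : FractionalIdeal (nonZeroDivisors R) K} (hA : IsHomFrac 𝒜 K A) :
    IsHomFrac 𝒜 K (σ x * A) := by
  obtain ⟨a, b, ha, hb, hb0, he⟩ := h
  obtain ⟨s, hs0, hsh, hle, hhom⟩ := hA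
  have key : σ (aK (s * b)) * (σ x * A)
      = ((Ideal.span {a} * idealOf K (σ (aK s) * A) : Ideal R) :
          FractionalIdeal (nonZeroDivisors R) K) := by
    have hab : σ x * σ (aK b) = σ (aK a) := by
      rw [spanSingleton_mul_spanSingleton, he]
    rw [coeIdeal_mul, coeIdeal_span_singleton, coeIdeal_idealOf K hle, _root_.map_mul,
      ← spanSingleton_mul_spanSingleton, ← hab]
    ring
  refine ⟨s * b, mul_ne_zero hs0 hb0, SetLike.IsHomogeneousElem.mul hsh hb, ?_, ?_⟩ <;> rw [key]
  · exact coeIdeal_le_one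
  · rw [idealOf_coeIdeal]
    exact (isHomIdeal_iff 𝒜).mpr
      ((Ideal.homogeneous_span 𝒜 _ (fun y hy => by rwa [Set.mem_singleton_iff.mp hy])).mul
        ((isHomIdeal_iff 𝒜).mp hhom))

theorem isHomFrac_add {A B : FractionalIdeal (nonZeroDivisors R) K}
    (hA : IsHomFrac 𝒜 K A) (hB : IsHomFrac 𝒜 K B) : IsHomFrac 𝒜 K (A + B) := by
  obtain ⟨s, hs0, hsh, hsle, hshom⟩ := hA
  obtain ⟨t, ht0, hth, htle, hthom⟩ := hB
  have e1 : σ (aK (s * t)) * A = σ (aK t) * ((idealOf K (σ (aK s) * A) : Ideal R) :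
      FractionalIdeal (nonZeroDivisors R) K) := by
    rw [coeIdeal_idealOf K hsle, _root_.map_mul, ← spanSingleton_mul_spanSingleton]
    ring
  have e2 : σ (aK (s * t)) * B = σ (aK s) * ((idealOf K (σ (aK t) * B) : Ideal R) :
      FractionalIdeal (nonZeroDivisors R) K) := by
    rw [coeIdeal_idealOf K htle, _root_.map_mul, ← spanSingleton_mul_spanSingleton]
    ring
  have key : σ (aK (s * t)) * (A + B)
      = ((Ideal.span {t} * idealOf K (σ (aK s) * A)
          + Ideal.span {s} * idealOf K (σ (aK t) * B) : Ideal R) :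
          FractionalIdeal (nonZeroDivisors R) K) := by
    rw [mul_add, e1, e2, Submodule.add_eq_sup, coeIdeal_sup, coeIdeal_mul, coeIdeal_mul,
      coeIdeal_span_singleton, coeIdeal_span_singleton]
  refine ⟨s * t, mul_ne_zero hs0 ht0, SetLike.IsHomogeneousElem.mul hsh hth, ?_, ?_⟩ <;> rw [key]
  · exact coeIdeal_le_one
  · rw [idealOf_coeIdeal]
    have h1 : Ideal.IsHomogeneous 𝒜 (Ideal.span {t} * idealOf K (σ (aK s) * A)) :=
      (Ideal.homogeneous_span 𝒜 _ (fun y hy => by rwa [Set.mem_singleton_iff.mp hy])).mul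
        ((isHomIdeal_iff 𝒜).mp hshom)
    have h2 : Ideal.IsHomogeneous 𝒜 (Ideal.span {s} * idealOf K (σ (aK t) * B)) :=
      (Ideal.homogeneous_span 𝒜 _ (fun y hy => by rwa [Set.mem_singleton_iff.mp hy])).mul
        ((isHomIdeal_iff 𝒜).mp hthom)
    rw [isHomIdeal_iff, Submodule.add_eq_sup]
    exact h1.sup h2

theorem aK_ne_zero {s : R} (hs : s ≠ 0) : (aK s : K) ≠ 0 := by
  rw [Ne, IsFractionRing.to_map_eq_zero_iff]
  exact hs

theorem star_le_one (u : HomStarOp 𝒜 K) {J : FractionalIdeal (nonZeroDivisors R) K}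
    (h0 : J ≠ 0) (hh : IsHomFrac 𝒜 K J) (hle : J ≤ 1) : u.toFun J ≤ 1 := by
  have h1 : u.toFun 1 = 1 := by
    have := u.map_span 1 one_ne_zero (isHomElem_one 𝒜 K)
    rwa [spanSingleton_one] at this
  rw [← h1]
  exact u.mono J 1 h0 one_ne_zero hh (isHomFrac_one 𝒜 K) hle

theorem homStar_ne_zero (u : HomStarOp 𝒜 K) {A : FractionalIdeal (nonZeroDivisors R) K}
    (h0 : A ≠ 0) (hh : IsHomFrac 𝒜 K A) : u.toFun A ≠ 0 := by
  intro e
  exact h0 (le_antisymm (e ▸ u.le_star A h0 hh) (zero_le A))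

theorem star_smul_le_one (u : HomStarOp 𝒜 K) {A : FractionalIdeal (nonZeroDivisors R) K}
    (hA0 : A ≠ 0) (hAh : IsHomFrac 𝒜 K A) {s : R} (hs0 : s ≠ 0)
    (hsh : SetLike.IsHomogeneousElem 𝒜 s) (hle : σ (aK s) * A ≤ 1) :
    σ (aK s) * u.toFun A ≤ 1 := by
  have hsK : (aK s : K) ≠ 0 := aK_ne_zero K hs0
  rw [← u.map_smul (aK s) hsK (isHomElem_algebraMap 𝒜 K hsh) A hA0 hAh]
  exact star_le_one 𝒜 K u (spanSingleton_mul_ne_zero K hsK hA0)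
    (isHomFrac_smul_of_le_one 𝒜 K hsK (isHomElem_algebraMap 𝒜 K hsh) hAh) hle

variable (S : Set {u : HomStarOp 𝒜 K // IsFiniteTypeHomStar 𝒜 K u})

/-- The infimum operation `A ↦ ⋂ u ∈ S, A^u` (on nonzero homogeneous fractional ideals). -/
noncomputable def infOp (hS : S.Nonempty) (A : FractionalIdeal (nonZeroDivisors R) K) :
    FractionalIdeal (nonZeroDivisors R) K :=
  if h : A ≠ 0 ∧ IsHomFrac 𝒜 K A then
    ⟨⨅ u ∈ S, (u.1.toFun A : Submodule R K),
      isFractional_of_le (J := hS.choose.1.toFun A) (iInf₂_le hS.choose hS.choose_spec)⟩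
  else A

theorem mem_infOp (hS : S.Nonempty) {A : FractionalIdeal (nonZeroDivisors R) K}
    (h0 : A ≠ 0) (hh : IsHomFrac 𝒜 K A) {x : K} :
    x ∈ infOp 𝒜 K S hS A ↔ ∀ u ∈ S, x ∈ u.1.toFun A := by
  have e : infOp 𝒜 K S hS A = (⟨⨅ u ∈ S, (u.1.toFun A : Submodule R K),
      isFractional_of_le (J := hS.choose.1.toFun A) (iInf₂_le hS.choose hS.choose_spec)⟩ :
      FractionalIdeal (nonZeroDivisors R) K) := dif_pos ⟨h0, hh⟩
  rw [e]
  change x ∈ (⨅ u ∈ S, (u.1.toFun A : Submodule R K)) ↔ _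
  simp only [Submodule.mem_iInf]
  rfl

theorem infOp_le_star (hS : S.Nonempty) {A : FractionalIdeal (nonZeroDivisors R) K}
    (h0 : A ≠ 0) (hh : IsHomFrac 𝒜 K A) {u} (hu : u ∈ S) :
    infOp 𝒜 K S hS A ≤ u.1.toFun A :=
  fun _ hx => (mem_infOp 𝒜 K S hS h0 hh).mp hx u hu

theorem le_star_infOp (hS : S.Nonempty) {A : FractionalIdeal (nonZeroDivisors R) K}
    (h0 : A ≠ 0) (hh : IsHomFrac 𝒜 K A) : A ≤ infOp 𝒜 K S hS A :=
  fun x hx => (mem_infOp 𝒜 K S hS h0 hh).mpr fun u _ => u.1.le_star A h0 hh hx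

theorem infOp_ne_zero (hS : S.Nonempty) {A : FractionalIdeal (nonZeroDivisors R) K}
    (h0 : A ≠ 0) (hh : IsHomFrac 𝒜 K A) : infOp 𝒜 K S hS A ≠ 0 := by
  intro e
  exact h0 (le_antisymm (e ▸ le_star_infOp 𝒜 K S hS h0 hh) (zero_le A))

theorem infOp_hom (hS : S.Nonempty) {A : FractionalIdeal (nonZeroDivisors R) K}
    (h0 : A ≠ 0) (hh : IsHomFrac 𝒜 K A) : IsHomFrac 𝒜 K (infOp 𝒜 K S hS A) := by
  obtain ⟨s, hs0, hsh, hle, hhom⟩ := id hh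
  obtain ⟨d, hd⟩ := id hsh
  have hsK : (aK s : K) ≠ 0 := aK_ne_zero K hs0
  refine ⟨s, hs0, hsh, ?_, ?_⟩
  · intro y hy
    obtain ⟨z, hz, rfl⟩ := mem_singleton_mul.mp hy
    have hz0 : z ∈ hS.choose.1.toFun A := (mem_infOp 𝒜 K S hS h0 hh).mp hz _ hS.choose_spec
    exact star_smul_le_one 𝒜 K hS.choose.1 h0 hh hs0 hsh hle
      (mem_singleton_mul.mpr ⟨z, hz0, rfl⟩)
  · intro f hf γ
    rw [mem_idealOf] at hf
    obtain ⟨x, hx, hfx⟩ := mem_singleton_mul.mp hf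
    set y : K := (aK s)⁻¹ * aK (DirectSum.decompose 𝒜 f γ : R) with hy_def
    have hy : ∀ u ∈ S, y ∈ u.1.toFun A := by
      intro u hu
      have hju := u.1.hom A h0 hh
      obtain ⟨y', hy', he⟩ := isHomFrac_component_mem 𝒜 K hju hs0 hd
        ((mem_infOp 𝒜 K S hS h0 hh).mp hx u hu) hfx.symm γ
      have : y = y' := by
        rw [hy_def, ← he, inv_mul_cancel_left₀ hsK]
      rwa [this]
    rw [mem_idealOf, GradedRing.proj_apply]
    refine mem_singleton_mul.mpr ⟨y, (mem_infOp 𝒜 K S hS h0 hh).mpr hy, ?_⟩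
    rw [hy_def, mul_inv_cancel_left₀ hsK]

theorem infOp_map_span (hS : S.Nonempty) {x : K} (hx : x ≠ 0) (hxh : IsHomElem 𝒜 K x) :
    infOp 𝒜 K S hS (σ x) = σ x := by
  have h0 : (σ x : FractionalIdeal (nonZeroDivisors R) K) ≠ 0 := by
    rw [Ne, spanSingleton_eq_zero_iff]; exact hx
  have hh : IsHomFrac 𝒜 K (σ x) := isHomFrac_spanSingleton 𝒜 K hxh
  ext y
  rw [mem_infOp 𝒜 K S hS h0 hh]
  constructor
  · intro h
    have := h hS.choose hS.choose_spec
    rwa [hS.choose.1.map_span x hx hxh] at this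
  · intro h u _
    rw [u.1.map_span x hx hxh]
    exact h

theorem infOp_map_smul (hS : S.Nonempty) {x : K} (hx : x ≠ 0) (hxh : IsHomElem 𝒜 K x)
    {A : FractionalIdeal (nonZeroDivisors R) K} (h0 : A ≠ 0) (hh : IsHomFrac 𝒜 K A) :
    infOp 𝒜 K S hS (σ x * A) = σ x * infOp 𝒜 K S hS A := by
  have hm0 : σ x * A ≠ 0 := spanSingleton_mul_ne_zero K hx h0
  have hmh : IsHomFrac 𝒜 K (σ x * A) := isHomFrac_smul_of_le_one 𝒜 K hx hxh hh
  ext y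
  rw [mem_infOp 𝒜 K S hS hm0 hmh]
  constructor
  · intro h
    refine mem_singleton_mul.mpr ⟨x⁻¹ * y, ?_, (mul_inv_cancel_left₀ hx y).symm⟩
    rw [mem_infOp 𝒜 K S hS h0 hh]
    intro u hu
    have h2 := h u hu
    rw [u.1.map_smul x hx hxh A h0 hh] at h2
    obtain ⟨z, hz, rfl⟩ := mem_singleton_mul.mp h2
    rwa [inv_mul_cancel_left₀ hx]
  · intro h u hu
    rw [u.1.map_smul x hx hxh A h0 hh]
    obtain ⟨z, hz, rfl⟩ := mem_singleton_mul.mp h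
    exact mem_singleton_mul.mpr ⟨z, (mem_infOp 𝒜 K S hS h0 hh).mp hz u hu, rfl⟩

theorem infOp_mono (hS : S.Nonempty) {A B : FractionalIdeal (nonZeroDivisors R) K}
    (hA0 : A ≠ 0) (hB0 : B ≠ 0) (hAh : IsHomFrac 𝒜 K A) (hBh : IsHomFrac 𝒜 K B)
    (hAB : A ≤ B) : infOp 𝒜 K S hS A ≤ infOp 𝒜 K S hS B := by
  intro y hy
  exact (mem_infOp 𝒜 K S hS hB0 hBh).mpr fun u hu =>
    u.1.mono A B hA0 hB0 hAh hBh hAB ((mem_infOp 𝒜 K S hS hA0 hAh).mp hy u hu)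

theorem infOp_idem (hS : S.Nonempty) {A : FractionalIdeal (nonZeroDivisors R) K}
    (h0 : A ≠ 0) (hh : IsHomFrac 𝒜 K A) :
    infOp 𝒜 K S hS (infOp 𝒜 K S hS A) = infOp 𝒜 K S hS A := by
  have hT0 := infOp_ne_zero 𝒜 K S hS h0 hh
  have hTh := infOp_hom 𝒜 K S hS h0 hh
  apply le_antisymm
  · intro y hy
    have hy' := (mem_infOp 𝒜 K S hS hT0 hTh).mp hy
    refine (mem_infOp 𝒜 K S hS h0 hh).mpr fun u hu => ?_
    have hu0 := homStar_ne_zero 𝒜 K u.1 h0 hh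
    have huh := u.1.hom A h0 hh
    have h1 : infOp 𝒜 K S hS A ≤ u.1.toFun A := infOp_le_star 𝒜 K S hS h0 hh hu
    have h2 := u.1.mono _ _ hT0 hu0 hTh huh h1
    have h3 := u.1.idem A h0 hh
    exact h3 ▸ h2 (hy' u hu)
  · exact le_star_infOp 𝒜 K S hS hT0 hTh

/-- The infimum as a homogeneous star operation. -/
noncomputable def tOp (hS : S.Nonempty) : HomStarOp 𝒜 K where
  toFun := infOp 𝒜 K S hS
  hom := fun A h0 hh => infOp_hom 𝒜 K S hS h0 hh
  map_span := fun x hx hxh => infOp_map_span 𝒜 K S hS hx hxh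
  map_smul := fun x hx hxh A h0 hh => infOp_map_smul 𝒜 K S hS hx hxh h0 hh
  le_star := fun A h0 hh => le_star_infOp 𝒜 K S hS h0 hh
  mono := fun A B hA0 hB0 hAh hBh hAB => infOp_mono 𝒜 K S hS hA0 hB0 hAh hBh hAB
  idem := fun A h0 hh => infOp_idem 𝒜 K S hS h0 hh

theorem isHomFrac_zero : IsHomFrac 𝒜 K (0 : FractionalIdeal (nonZeroDivisors R) K) := by
  refine ⟨1, one_ne_zero, SetLike.isHomogeneousElem_one 𝒜, ?_, ?_⟩
  · rw [mul_zero]; exact zero_le _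
  · rw [mul_zero]
    intro f hf γ
    rw [mem_idealOf, mem_zero_iff] at hf
    have hf0 : f = 0 := by
      rwa [IsFractionRing.to_map_eq_zero_iff] at hf
    subst hf0
    rw [mem_idealOf, mem_zero_iff]
    simp

theorem exists_fg_hom_sub {A : FractionalIdeal (nonZeroDivisors R) K} (h0 : A ≠ 0)
    (hh : IsHomFrac 𝒜 K A) :
    ∃ B, B ≠ 0 ∧ B ≤ A ∧ IsHomFrac 𝒜 K B ∧ (B : Submodule R K).FG := by
  obtain ⟨s, hs0, hsh, hle, hhom⟩ := hh
  have hsK := aK_ne_zero K hs0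
  have hI : idealOf K (σ (aK s) * A) ≠ ⊥ := by
    intro e
    have h1 := coeIdeal_idealOf K hle
    rw [e] at h1
    exact spanSingleton_mul_ne_zero K hsK h0 (by rw [← h1]; simp)
  obtain ⟨r, hrI, hr0⟩ := Submodule.exists_mem_ne_zero_of_ne_bot hI
  obtain ⟨γ, hγ⟩ : ∃ γ, (DirectSum.decompose 𝒜 r γ : R) ≠ 0 := by
    by_contra hcon
    push_neg at hcon
    apply hr0
    rw [← DirectSum.sum_support_decompose 𝒜 r]
    exact Finset.sum_eq_zero fun γ _ => hcon γ
  have hcI : (DirectSum.decompose 𝒜 r γ : R) ∈ idealOf K (σ (aK s) * A) := by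
    have := hhom r hrI γ
    rwa [GradedRing.proj_apply] at this
  set c : R := (DirectSum.decompose 𝒜 r γ : R) with hc_def
  set x : K := (aK s)⁻¹ * aK c with hx_def
  have hxA : x ∈ A := by
    rw [mem_idealOf] at hcI
    obtain ⟨y, hy, hyeq⟩ := mem_singleton_mul.mp hcI
    have hxy : x = y := by rw [hx_def, hyeq, inv_mul_cancel_left₀ hsK]
    rwa [hxy]
  have hx0 : x ≠ 0 := mul_ne_zero (inv_ne_zero hsK) (aK_ne_zero K hγ)
  refine ⟨σ x, by rwa [Ne, spanSingleton_eq_zero_iff], spanSingleton_le_iff_mem.mpr hxA,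
    isHomFrac_spanSingleton 𝒜 K ⟨c, s, ⟨γ, (DirectSum.decompose 𝒜 r γ).2⟩, hsh, hs0, ?_⟩, ?_⟩
  · rw [hx_def, mul_comm ((aK s)⁻¹) (aK c), mul_assoc, inv_mul_cancel₀ hsK, mul_one]
  · rw [coe_spanSingleton]
    exact Submodule.fg_span_singleton x

theorem mem_star_iff_components {s₀ : R} (hs₀ : s₀ ≠ 0) {d₀ : Γ} (hd₀ : s₀ ∈ 𝒜 d₀)
    {r : R} {x : K} (hxr : aK s₀ * x = aK r)
    {J : FractionalIdeal (nonZeroDivisors R) K} (hJ : IsHomFrac 𝒜 K J) :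
    x ∈ J ↔ ∀ γ ∈ (DirectSum.decompose 𝒜 r).support,
      (aK s₀)⁻¹ * aK (DirectSum.decompose 𝒜 r γ : R) ∈ J := by
  have hsK := aK_ne_zero K hs₀
  constructor
  · intro hx γ _
    obtain ⟨y, hy, he⟩ := isHomFrac_component_mem 𝒜 K hJ hs₀ hd₀ hx hxr γ
    have hxy : (aK s₀)⁻¹ * aK (DirectSum.decompose 𝒜 r γ : R) = y := by
      rw [← he, inv_mul_cancel_left₀ hsK]
    rwa [hxy]
  · intro h
    have hx : x = ∑ γ ∈ (DirectSum.decompose 𝒜 r).support,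
        (aK s₀)⁻¹ * aK (DirectSum.decompose 𝒜 r γ : R) := by
      rw [← Finset.mul_sum, ← _root_.map_sum, DirectSum.sum_support_decompose 𝒜 r, ← hxr,
        inv_mul_cancel_left₀ hsK]
    rw [hx]
    exact Submodule.sum_mem (J : Submodule R K) fun γ hγ => h γ hγ

theorem component_set_eq {c : K} (hc : c ≠ 0) (hch : IsHomElem 𝒜 K c)
    {B : FractionalIdeal (nonZeroDivisors R) K} (hB0 : B ≠ 0) (hBh : IsHomFrac 𝒜 K B) :
    {v : HomStarOp 𝒜 K | c ∈ v.toFun B}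
      = {v : HomStarOp 𝒜 K | (1 : K) ∈ v.toFun (σ c⁻¹ * B)} := by
  ext v
  simp only [Set.mem_setOf_eq]
  rw [v.map_smul c⁻¹ (inv_ne_zero hc) (isHomElem_inv 𝒜 K hc hch) B hB0 hBh]
  constructor
  · intro h
    exact mem_singleton_mul.mpr ⟨c, h, (inv_mul_cancel₀ hc).symm⟩
  · intro h
    obtain ⟨z, hz, he⟩ := mem_singleton_mul.mp h
    have hz' : z = c := by rw [← mul_inv_cancel_left₀ hc z, ← he, mul_one]
    rwa [hz'] at hz

theorem V_eq {s₀ : R} (hs₀ : s₀ ≠ 0) {d₀ : Γ} (hd₀ : s₀ ∈ 𝒜 d₀)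
    {r : R} {x : K} (hxr : aK s₀ * x = aK r)
    {B : FractionalIdeal (nonZeroDivisors R) K} (hB0 : B ≠ 0) (hBh : IsHomFrac 𝒜 K B) :
    {v : HomStarOp 𝒜 K | x ∈ v.toFun B}
      = ⋂ γ ∈ (DirectSum.decompose 𝒜 r).support,
          {v : HomStarOp 𝒜 K | (aK s₀)⁻¹ * aK (DirectSum.decompose 𝒜 r γ : R) ∈ v.toFun B} := by
  ext v
  simp only [Set.mem_iInter, Set.mem_setOf_eq]
  exact mem_star_iff_components 𝒜 K hs₀ hd₀ hxr (v.hom B hB0 hBh)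

end Helpers

/-- the infimum of a quasi-compact (nonempty) subspace of `HStar_f(R)` is again a
finite-type homogeneous star operation. -/
theorem stmt_16
    {Γ : Type*} [AddCommMonoid Γ] [LinearOrder Γ] [IsOrderedCancelAddMonoid Γ] [DecidableEq Γ]
    {R : Type*} [CommRing R] [IsDomain R]
    (𝒜 : Γ → AddSubgroup R) [GradedRing 𝒜]
    (K : Type*) [Field K] [Algebra R K] [IsFractionRing R K]
    (S : Set {u : HomStarOp 𝒜 K // IsFiniteTypeHomStar 𝒜 K u}) (hS : S.Nonempty) :
    letI : TopologicalSpace (HomStarOp 𝒜 K) := TopologicalSpace.generateFrom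
      {U | ∃ A : FractionalIdeal (nonZeroDivisors R) K, A ≠ 0 ∧ IsHomFrac 𝒜 K A ∧
        U = {t : HomStarOp 𝒜 K | (1 : K) ∈ t.toFun A}}
    IsCompact S →
    ∃ t : HomStarOp 𝒜 K, IsFiniteTypeHomStar 𝒜 K t ∧
      (∀ A : FractionalIdeal (nonZeroDivisors R) K, A ≠ 0 → IsHomFrac 𝒜 K A →
        {x : K | x ∈ t.toFun A} = ⋂ u ∈ S, {x : K | x ∈ u.1.toFun A}) := by
  letI : TopologicalSpace (HomStarOp 𝒜 K) := TopologicalSpace.generateFrom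
      {U | ∃ A : FractionalIdeal (nonZeroDivisors R) K, A ≠ 0 ∧ IsHomFrac 𝒜 K A ∧
        U = {t : HomStarOp 𝒜 K | (1 : K) ∈ t.toFun A}}
  intro hC
  refine ⟨tOp 𝒜 K S hS, ?_, fun A h0 hh => ?_⟩
  · -- finite type
    intro A h0 hh
    ext x
    simp only [Set.mem_setOf_eq]
    constructor
    · intro hx
      have hx' := (mem_infOp 𝒜 K S hS h0 hh).mp hx
      simp only [homFinTypeSet]
      by_cases hx0 : x = 0
      · obtain ⟨B, hB0, hBle, hBh, hBfg⟩ := exists_fg_hom_sub 𝒜 K h0 hh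
        refine Set.mem_biUnion (show B ∈ _ from ⟨hB0, hBle, hBh, hBfg⟩) ?_
        show x ∈ infOp 𝒜 K S hS B
        rw [hx0]
        exact Submodule.zero_mem (infOp 𝒜 K S hS B : Submodule R K)
      · obtain ⟨s₀, hs₀0, ⟨d₀, hd₀⟩, hle₀, hhom₀⟩ := hS.choose.1.hom A h0 hh
        have hsK := aK_ne_zero K hs₀0
        have hxu₀ : x ∈ hS.choose.1.toFun A := hx' hS.choose hS.choose_spec
        have hmem1 : algebraMap R K s₀ * x ∈ (1 : FractionalIdeal (nonZeroDivisors R) K) :=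
          hle₀ (mem_singleton_mul.mpr ⟨x, hxu₀, rfl⟩)
        obtain ⟨r, hr⟩ := (mem_one_iff _).mp hmem1
        have hBex : ∀ u : S, ∃ B, (B ≠ 0 ∧ B ≤ A ∧ IsHomFrac 𝒜 K B ∧ (B : Submodule R K).FG)
            ∧ x ∈ u.1.1.toFun B := by
          intro u
          have hfin := u.1.2 A h0 hh
          have hmem2 : x ∈ homFinTypeSet 𝒜 K u.1.1.toFun A := by
            rw [← hfin]
            exact hx' u.1 u.2
          simp only [homFinTypeSet, Set.mem_iUnion, Set.mem_setOf_eq, exists_prop] at hmem2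
          obtain ⟨B, hB, hxB⟩ := hmem2
          exact ⟨B, hB, hxB⟩
        choose Bf hBf hxBf using hBex
        have hVopen : ∀ (i : S), IsOpen {v : HomStarOp 𝒜 K | x ∈ v.toFun (Bf i)} := by
          intro i
          obtain ⟨hB0, hBle, hBh, hBfg⟩ := hBf i
          rw [V_eq 𝒜 K hs₀0 hd₀ hr.symm hB0 hBh]
          apply isOpen_biInter_finset
          intro γ _
          by_cases hc : (algebraMap R K s₀)⁻¹
              * algebraMap R K (DirectSum.decompose 𝒜 r γ : R) = 0
          · have huniv : {v : HomStarOp 𝒜 K | (algebraMap R K s₀)⁻¹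
                * algebraMap R K (DirectSum.decompose 𝒜 r γ : R) ∈ v.toFun (Bf i)}
                = Set.univ := by
              ext v
              simp only [Set.mem_setOf_eq, Set.mem_univ, iff_true]
              rw [hc]
              exact Submodule.zero_mem (v.toFun (Bf i) : Submodule R K)
            rw [huniv]
            exact isOpen_univ
          · have hch : IsHomElem 𝒜 K ((algebraMap R K s₀)⁻¹
                * algebraMap R K (DirectSum.decompose 𝒜 r γ : R)) :=
              ⟨(DirectSum.decompose 𝒜 r γ : R), s₀, ⟨γ, (DirectSum.decompose 𝒜 r γ).2⟩,
                ⟨d₀, hd₀⟩, hs₀0, by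
                  rw [mul_comm ((algebraMap R K s₀)⁻¹) _, mul_assoc, inv_mul_cancel₀ hsK,
                    mul_one]⟩
            rw [component_set_eq 𝒜 K hc hch hB0 hBh]
            exact TopologicalSpace.GenerateOpen.basic _
              ⟨spanSingleton (nonZeroDivisors R) ((algebraMap R K s₀)⁻¹
                  * algebraMap R K (DirectSum.decompose 𝒜 r γ : R))⁻¹ * Bf i,
                spanSingleton_mul_ne_zero K (inv_ne_zero hc) hB0,
                isHomFrac_smul_of_le_one 𝒜 K (inv_ne_zero hc)
                  (isHomElem_inv 𝒜 K hc hch) hBh, rfl⟩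
        obtain ⟨T, hT⟩ := hC.elim_finite_subcover
          (fun i : S => (Subtype.val ⁻¹' {v : HomStarOp 𝒜 K | x ∈ v.toFun (Bf i)} :
            Set {u : HomStarOp 𝒜 K // IsFiniteTypeHomStar 𝒜 K u}))
          (fun i => IsOpen.preimage continuous_subtype_val (hVopen i)) (fun v hv =>
            Set.mem_iUnion.mpr ⟨⟨v, hv⟩, hxBf ⟨v, hv⟩⟩)
        have hmemT : ∀ v ∈ S, ∃ i ∈ T, x ∈ v.1.toFun (Bf i) := by
          intro v hv
          have h2 := hT hv
          simp only [Set.mem_iUnion, Set.mem_preimage, Set.mem_setOf_eq, exists_prop] at h2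
          exact h2
        obtain ⟨i₀, hi₀T, _⟩ := hmemT hS.choose hS.choose_spec
        have hP : IsHomFrac 𝒜 K (T.sup Bf)
            ∧ ((T.sup Bf : FractionalIdeal (nonZeroDivisors R) K) : Submodule R K).FG := by
          refine Finset.sup_induction
            (p := fun C : FractionalIdeal (nonZeroDivisors R) K =>
              IsHomFrac 𝒜 K C ∧ (C : Submodule R K).FG) ?_ ?_ ?_
          · rw [FractionalIdeal.bot_eq_zero]
            exact ⟨isHomFrac_zero 𝒜 K, by rw [coe_zero]; exact Submodule.fg_bot⟩
          · rintro a ⟨ha1, ha2⟩ b ⟨hb1, hb2⟩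
            refine ⟨by rw [sup_eq_add]; exact isHomFrac_add 𝒜 K ha1 hb1, ?_⟩
            rw [sup_eq_add, coe_add, Submodule.add_eq_sup]
            exact ha2.sup hb2
          · exact fun i _ => ⟨(hBf i).2.2.1, (hBf i).2.2.2⟩
        have hBle : T.sup Bf ≤ A := Finset.sup_le fun i _ => (hBf i).2.1
        have hB0 : T.sup Bf ≠ 0 := fun e =>
          (hBf i₀).1 (le_antisymm (e ▸ Finset.le_sup hi₀T) (zero_le _))
        refine Set.mem_biUnion (show T.sup Bf ∈ _ from ⟨hB0, hBle, hP.1, hP.2⟩) ?_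
        show x ∈ infOp 𝒜 K S hS (T.sup Bf)
        rw [mem_infOp 𝒜 K S hS hB0 hP.1]
        intro u hu
        obtain ⟨i, hiT, hi⟩ := hmemT u hu
        exact u.1.mono (Bf i) (T.sup Bf) (hBf i).1 hB0 (hBf i).2.2.1 hP.1
          (Finset.le_sup hiT) hi
    · intro hx
      simp only [homFinTypeSet, Set.mem_iUnion, Set.mem_setOf_eq, exists_prop] at hx
      obtain ⟨B, ⟨hB0, hBle, hBh, _⟩, hxB⟩ := hx
      exact (mem_infOp 𝒜 K S hS h0 hh).mpr fun u hu =>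
        u.1.mono B A hB0 h0 hBh hh hBle ((mem_infOp 𝒜 K S hS hB0 hBh).mp hxB u hu)
  · ext x
    simp only [Set.mem_iInter, Set.mem_setOf_eq]
    exact mem_infOp 𝒜 K S hS h0 hh
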